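/- The Hausdorff dimension of {x∈(0,1]: d_n(x)≥αn for infinitely many n} is at most s(α), for any α>0, where s(α) solves 2^{sα}(2^s−1)=1. -/

import Mathlib

open MeasureTheory Filter Set Real
open scoped ENNReal NNReal Topology

/-- First digit of the power-2-decaying Gauss-like expansion:
`⌈y⌉` in the paper denotes the smallest integer strictly larger than `y`. -/
noncomputable def p2dD1 (x : ℝ) : ℕ := (⌊-Real.logb 2 x⌋ + 1).toNat

/-- The Gauss-like map `T x = 2^n x - 1` on `(1/2^n, 1/2^(n-1)]`. -/
noncomputable def p2dT (x : ℝ) : ℝ := 2 ^ p2dD1 x * x - 1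

/-- `n`-th digit (`n ≥ 1`) of the P2DGL expansion. -/
noncomputable def p2dDigit (n : ℕ) (x : ℝ) : ℕ := p2dD1 (p2dT^[n-1] x)

/-- Maximal digit among the first `n` digits. -/
noncomputable def p2dL (n : ℕ) (x : ℝ) : ℕ :=
  Finset.sup (Finset.Icc 1 n) (fun i => p2dDigit i x)

lemma p2dD1_cast {x : ℝ} (hx : x ∈ Set.Ioc (0:ℝ) 1) :
    (p2dD1 x : ℝ) = (⌊-Real.logb 2 x⌋ : ℝ) + 1 := by
  have h0 : (0:ℤ) ≤ ⌊-Real.logb 2 x⌋ := by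
    apply Int.floor_nonneg.2
    simpa using Real.logb_nonpos (b := 2) one_lt_two hx.1.le hx.2
  have h1 : ((⌊-Real.logb 2 x⌋ + 1).toNat : ℤ) = ⌊-Real.logb 2 x⌋ + 1 :=
    Int.toNat_of_nonneg (by omega)
  rw [p2dD1]
  exact_mod_cast congrArg (Int.cast : ℤ → ℝ) h1

lemma one_le_p2dD1 {x : ℝ} (hx : x ∈ Set.Ioc (0:ℝ) 1) : 1 ≤ p2dD1 x := by
  have h := p2dD1_cast hx
  have h0 : (0:ℤ) ≤ ⌊-Real.logb 2 x⌋ := by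
    apply Int.floor_nonneg.2
    simpa using Real.logb_nonpos (b := 2) one_lt_two hx.1.le hx.2
  rw [p2dD1]
  omega

lemma p2dD1_le {x : ℝ} (hx : x ∈ Set.Ioc (0:ℝ) 1) :
    x ≤ (2:ℝ) ^ (1 - (p2dD1 x : ℝ)) := by
  rw [p2dD1_cast hx]
  have h1 : Real.logb 2 x ≤ -(⌊-Real.logb 2 x⌋ : ℝ) := by
    have := Int.floor_le (-Real.logb 2 x); linarith
  calc x = (2:ℝ) ^ (Real.logb 2 x) := (Real.rpow_logb two_pos (by norm_num) hx.1).symm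
    _ ≤ (2:ℝ) ^ (1 - ((⌊-Real.logb 2 x⌋ : ℝ) + 1)) := by
        rw [Real.rpow_le_rpow_left_iff one_lt_two]; linarith

lemma p2dD1_gt {x : ℝ} (hx : x ∈ Set.Ioc (0:ℝ) 1) :
    (2:ℝ) ^ (-(p2dD1 x : ℝ)) < x := by
  rw [p2dD1_cast hx]
  have h1 : -((⌊-Real.logb 2 x⌋ : ℝ) + 1) < Real.logb 2 x := by
    have := Int.lt_floor_add_one (-Real.logb 2 x); linarith
  calc (2:ℝ) ^ (-((⌊-Real.logb 2 x⌋:ℝ) + 1)) < (2:ℝ) ^ (Real.logb 2 x) := by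
        rw [Real.rpow_lt_rpow_left_iff one_lt_two]; linarith
    _ = x := Real.rpow_logb two_pos (by norm_num) hx.1

lemma p2dT_mem {x : ℝ} (hx : x ∈ Set.Ioc (0:ℝ) 1) : p2dT x ∈ Set.Ioc (0:ℝ) 1 := by
  have hpow : (2:ℝ) ^ p2dD1 x = (2:ℝ) ^ ((p2dD1 x : ℝ)) := by
    rw [Real.rpow_natCast]
  have h2 : (0:ℝ) < (2:ℝ) ^ ((p2dD1 x : ℝ)) := Real.rpow_pos_of_pos two_pos _
  constructor
  · have := p2dD1_gt hx
    have : (2:ℝ) ^ ((p2dD1 x : ℝ)) * ((2:ℝ) ^ (-(p2dD1 x : ℝ))) <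
        (2:ℝ) ^ ((p2dD1 x : ℝ)) * x := by
      exact (mul_lt_mul_iff_right₀ h2).2 this
    rw [← Real.rpow_add two_pos] at this
    simp only [add_neg_cancel, Real.rpow_zero] at this
    rw [← hpow] at this
    simp only [p2dT]
    linarith
  · have := p2dD1_le hx
    have : (2:ℝ) ^ ((p2dD1 x : ℝ)) * x ≤
        (2:ℝ) ^ ((p2dD1 x : ℝ)) * (2:ℝ) ^ (1 - (p2dD1 x : ℝ)) := by
      exact (mul_le_mul_iff_right₀ h2).2 this
    rw [← Real.rpow_add two_pos] at this
    have h21 : (2:ℝ) ^ ((p2dD1 x:ℝ) + (1 - (p2dD1 x:ℝ))) = 2 := by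
      norm_num
    rw [h21, ← hpow] at this
    simp only [p2dT]
    linarith

lemma p2dT_iterate_mem {x : ℝ} (hx : x ∈ Set.Ioc (0:ℝ) 1) (k : ℕ) :
    p2dT^[k] x ∈ Set.Ioc (0:ℝ) 1 := by
  induction k with
  | zero => simpa using hx
  | succ k ih => rw [Function.iterate_succ_apply']; exact p2dT_mem ih

noncomputable def p2dG : List ℕ → ℝ → ℝ
  | [], y => y
  | a :: l, y => (p2dG l y + 1) / 2 ^ a

lemma p2dG_affine (l : List ℕ) (y : ℝ) :
    p2dG l y = y * ((2:ℝ) ^ l.sum)⁻¹ + p2dG l 0 := by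
  induction l with
  | nil => simp [p2dG]
  | cons a l ih =>
      have h2 : ((2:ℝ) ^ a) ≠ 0 := by positivity
      simp only [p2dG, List.sum_cons, ih, pow_add]
      field_simp
      ring

lemma p2dG_mem {l : List ℕ} {y u : ℝ} (hy : y ∈ Set.Ioc 0 u) :
    p2dG l y ∈ Set.Ioc (p2dG l 0) (p2dG l 0 + u * ((2:ℝ) ^ l.sum)⁻¹) := by
  have h2 : (0:ℝ) < ((2:ℝ) ^ l.sum)⁻¹ := by positivity
  have h := p2dG_affine l y
  exact ⟨by nlinarith [hy.1], by nlinarith [hy.2]⟩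

/-- Reconstruction of `x` from its first `k` digits and `T^[k] x`. -/
lemma p2dG_repr {x : ℝ} (hx : x ∈ Set.Ioc (0:ℝ) 1) (k : ℕ) :
    x = p2dG (List.ofFn fun i : Fin k => p2dD1 (p2dT^[(i:ℕ)] x)) (p2dT^[k] x) := by
  induction k generalizing x with
  | zero => simp [p2dG]
  | succ k ih =>
      have hTx := p2dT_mem hx
      have hrec := ih hTx
      have hlist : (List.ofFn fun i : Fin (k+1) => p2dD1 (p2dT^[(i:ℕ)] x)) =
          p2dD1 x :: (List.ofFn fun i : Fin k => p2dD1 (p2dT^[(i:ℕ)] (p2dT x))) := by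
        rw [List.ofFn_succ]
        simp [Function.iterate_succ_apply]
      have hit : p2dT^[k+1] x = p2dT^[k] (p2dT x) := Function.iterate_succ_apply p2dT k x
      rw [hlist, hit, p2dG, ← hrec]
      have h2 : ((2:ℝ) ^ p2dD1 x) ≠ 0 := by positivity
      simp only [p2dT]
      field_simp
      ring

/-- Sum over tuples of a product equals power of the sum. -/
lemma tsum_pi_pow (f : ℕ → ENNReal) : ∀ k : ℕ,
    ∑' v : Fin k → ℕ, ∏ i, f (v i) = (∑' m, f m) ^ k := by
  intro k
  induction k with
  | zero =>
      simp only [pow_zero, Finset.univ_eq_empty, Finset.prod_empty]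
      exact tsum_eq_single default (fun b hb => absurd (Subsingleton.elim b default) hb)
  | succ k ih =>
      rw [← (Fin.consEquiv (fun _ : Fin (k+1) => ℕ)).tsum_eq]
      rw [ENNReal.tsum_prod']
      have : ∀ (a : ℕ) (v : Fin k → ℕ),
          (∏ i, f ((Fin.consEquiv (fun _ : Fin (k+1) => ℕ)) (a, v) i)) =
            f a * ∏ i, f (v i) := by
        intro a v
        simp only [Fin.consEquiv, Equiv.coe_fn_mk]
        rw [Fin.prod_univ_succ]
        simp
      simp only [this]
      rw [pow_succ]
      calc ∑' (a : ℕ), ∑' (v : Fin k → ℕ), f a * ∏ i, f (v i)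
          = ∑' (a : ℕ), f a * ∑' (v : Fin k → ℕ), ∏ i, f (v i) := by
            congr 1; ext a; rw [ENNReal.tsum_mul_left]
        _ = (∑' m, f m) * (∑' m, f m) ^ k := by
            rw [ih, ENNReal.tsum_mul_right]
        _ = (∑' m, f m) ^ k * (∑' m, f m) := by ring

/-- The covering intervals for the limsup set. -/
noncomputable def p2dCover (α : ℝ) (N : ℕ) (p : Σ k : ℕ, Fin k → ℕ) : Set ℝ :=
  if N ≤ p.1 + 1 then
    Set.Ioc (p2dG (List.ofFn fun i => p.2 i + 1) 0)
      (p2dG (List.ofFn fun i => p.2 i + 1) 0 +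
        (2:ℝ) ^ ((1:ℝ) - α * (p.1 + 1)) *
          ((2:ℝ) ^ (List.ofFn fun i => p.2 i + 1).sum)⁻¹)
  else ∅

lemma p2dCover_covers (α : ℝ) (N : ℕ) :
    {x : ℝ | x ∈ Set.Ioc (0:ℝ) 1 ∧ ∃ᶠ n in atTop, (α * n ≤ (p2dDigit n x : ℝ))} ⊆
      ⋃ p : (Σ k : ℕ, Fin k → ℕ), p2dCover α N p := by
  rintro x ⟨hx, hfr⟩
  obtain ⟨n, hn, hd⟩ := (hfr.and_eventually (eventually_ge_atTop (max N 1))).exists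
  have hn1 : 1 ≤ n := le_trans (le_max_right N 1) hd
  have hnN : N ≤ n := le_trans (le_max_left N 1) hd
  set k := n - 1 with hk
  have hkn : n = k + 1 := by omega
  -- the digits
  have hmem : ∀ i : ℕ, p2dT^[i] x ∈ Set.Ioc (0:ℝ) 1 := p2dT_iterate_mem hx
  set v : Fin k → ℕ := fun i => p2dD1 (p2dT^[(i:ℕ)] x) - 1 with hv
  have hlist : (List.ofFn fun i : Fin k => v i + 1) =
      (List.ofFn fun i : Fin k => p2dD1 (p2dT^[(i:ℕ)] x)) := by
    refine congrArg _ (funext fun i => ?_)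
    have := one_le_p2dD1 (hmem i)
    simp only [hv]
    omega
  set y : ℝ := p2dT^[k] x with hy
  have hymem : y ∈ Set.Ioc (0:ℝ) 1 := hmem k
  have hyle : y ≤ (2:ℝ) ^ ((1:ℝ) - α * n) := by
    have h1 : y ≤ (2:ℝ) ^ (1 - (p2dD1 y : ℝ)) := p2dD1_le hymem
    have h2 : α * n ≤ (p2dD1 y : ℝ) := by
      have : p2dDigit n x = p2dD1 y := by rw [p2dDigit, ← hk]
      rw [← this]; exact hn
    refine h1.trans ?_
    rw [Real.rpow_le_rpow_left_iff one_lt_two]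
    linarith
  refine Set.mem_iUnion.2 ⟨⟨k, v⟩, ?_⟩
  have hcond : N ≤ k + 1 := by omega
  rw [p2dCover, if_pos hcond]
  have hrepr := p2dG_repr hx k
  rw [hlist]
  have hyIoc : y ∈ Set.Ioc 0 ((2:ℝ) ^ ((1:ℝ) - α * n)) := ⟨hymem.1, hyle⟩
  have := p2dG_mem (l := List.ofFn fun i : Fin k => p2dD1 (p2dT^[(i:ℕ)] x)) hyIoc
  rw [← hrepr] at this
  have hcast : ((k:ℝ) + 1) = (n:ℝ) := by
    rw [hkn]; push_cast; ring
  simpa [hcast] using this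

lemma nat_pow_inv_eq (m : ℕ) : ((2:ℝ) ^ m)⁻¹ = (2:ℝ) ^ (-(m:ℝ)) := by
  rw [← Real.rpow_natCast 2 m, ← Real.rpow_neg two_pos.le]

lemma sum_ofFn_add_one {k : ℕ} (v : Fin k → ℕ) :
    (List.ofFn fun i => v i + 1).sum = (∑ i, v i) + k := by
  rw [List.sum_ofFn, Finset.sum_add_distrib]
  simp

lemma p2dCover_diam_le (α : ℝ) (hα : 0 < α) (N : ℕ) (p : Σ k : ℕ, Fin k → ℕ) :
    EMetric.diam (p2dCover α N p) ≤ ENNReal.ofReal ((2:ℝ) ^ ((2:ℝ) - N)) := by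
  rw [p2dCover]
  split_ifs with hcond
  · rw [EMetric.diam, Real.ediam_Ioc]
    apply ENNReal.ofReal_le_ofReal
    rw [add_sub_cancel_left, nat_pow_inv_eq, ← Real.rpow_add two_pos]
    rw [Real.rpow_le_rpow_left_iff one_lt_two]
    have h1' : p.1 ≤ (List.ofFn fun i => p.2 i + 1).sum := by
      rw [sum_ofFn_add_one]; omega
    have h1 : (p.1 : ℝ) ≤ ((List.ofFn fun i => p.2 i + 1).sum : ℝ) := by
      exact_mod_cast h1'
    have h2 : (N : ℝ) ≤ (p.1 : ℝ) + 1 := by exact_mod_cast hcond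
    nlinarith [mul_nonneg hα.le (by positivity : (0:ℝ) ≤ (p.1:ℝ) + 1)]
  · simp [EMetric.diam]

lemma p2d_sum_le (α τ : ℝ) (hα : 0 < α) (hτ : 0 < τ) (N : ℕ) :
    ∑' p : (Σ k : ℕ, Fin k → ℕ), EMetric.diam (p2dCover α N p) ^ τ ≤
      ENNReal.ofReal ((2:ℝ) ^ (τ*(1-α))) *
        ((ENNReal.ofReal ((2:ℝ)^(-(τ*(α+1)))) *
            (1 - ENNReal.ofReal ((2:ℝ)^(-τ)))⁻¹) ^ (N-1) *
          (1 - ENNReal.ofReal ((2:ℝ)^(-(τ*(α+1)))) *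
            (1 - ENNReal.ofReal ((2:ℝ)^(-τ)))⁻¹)⁻¹) := by
  set Q : ENNReal := ENNReal.ofReal ((2:ℝ)^(-τ)) with hQ
  set A : ENNReal := ENNReal.ofReal ((2:ℝ)^(-(τ*(α+1)))) with hA
  set G : ENNReal := (1 - Q)⁻¹ with hG
  set R : ENNReal := A * G with hR
  set C : ENNReal := ENNReal.ofReal ((2:ℝ) ^ (τ*(1-α))) with hC
  rw [ENNReal.tsum_sigma']
  have key : ∀ k : ℕ, ∑' v : Fin k → ℕ,
      EMetric.diam (p2dCover α N ⟨k, v⟩) ^ τ ≤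
        if N ≤ k + 1 then C * R ^ k else 0 := by
    intro k
    split_ifs with hcond
    · have hptwise : ∀ v : Fin k → ℕ,
          EMetric.diam (p2dCover α N ⟨k, v⟩) ^ τ =
            C * A ^ k * ∏ i, Q ^ (v i) := by
        intro v
        rw [p2dCover, if_pos hcond, EMetric.diam, Real.ediam_Ioc, add_sub_cancel_left]
        have hL : (0:ℝ) < (2:ℝ) ^ ((1:ℝ) - α * ((k:ℝ) + 1)) *
            ((2:ℝ) ^ (List.ofFn fun i => v i + 1).sum)⁻¹ := by positivity
        rw [ENNReal.ofReal_rpow_of_pos hL]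
        rw [nat_pow_inv_eq, ← Real.rpow_add two_pos, ← Real.rpow_mul two_pos.le]
        have hexp : ((1:ℝ) - α * ((k:ℝ) + 1) +
            -(((List.ofFn fun i => v i + 1).sum : ℕ) : ℝ)) * τ =
            τ * (1 - α) + -(τ * (α + 1)) * (k : ℝ) +
              -τ * ((∑ i, v i : ℕ) : ℝ) := by
          rw [sum_ofFn_add_one]
          push_cast
          ring
        rw [hexp, Real.rpow_add two_pos, Real.rpow_add two_pos]
        rw [ENNReal.ofReal_mul (by positivity), ENNReal.ofReal_mul (by positivity)]
        congr 1
        · congr 1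
          · rw [Real.rpow_mul two_pos.le, Real.rpow_natCast,
              ENNReal.ofReal_pow (by positivity)]
        · rw [Real.rpow_mul two_pos.le, Real.rpow_natCast,
            ENNReal.ofReal_pow (by positivity), Finset.prod_pow_eq_pow_sum]
      calc ∑' v : Fin k → ℕ, EMetric.diam (p2dCover α N ⟨k, v⟩) ^ τ
          = ∑' v : Fin k → ℕ, C * A ^ k * ∏ i, Q ^ (v i) := by
            exact tsum_congr hptwise
        _ = C * A ^ k * ∑' v : Fin k → ℕ, ∏ i, Q ^ (v i) := ENNReal.tsum_mul_left
        _ = C * A ^ k * (∑' m, Q ^ m) ^ k := by rw [tsum_pi_pow]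
        _ = C * A ^ k * G ^ k := by rw [ENNReal.tsum_geometric]
        _ = C * (A ^ k * G ^ k) := by ring
        _ = C * R ^ k := by rw [hR, mul_pow]
        _ ≤ C * R ^ k := le_rfl
    · have : ∀ v : Fin k → ℕ, EMetric.diam (p2dCover α N ⟨k, v⟩) ^ τ = 0 := by
        intro v
        rw [p2dCover, if_neg hcond]
        simp [EMetric.diam, ENNReal.zero_rpow_of_pos hτ]
      simp [this]
  calc ∑' k, ∑' v : Fin k → ℕ, EMetric.diam (p2dCover α N ⟨k, v⟩) ^ τ
      ≤ ∑' k, if N ≤ k + 1 then C * R ^ k else 0 := ENNReal.tsum_le_tsum key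
    _ ≤ C * (R ^ (N-1) * (1 - R)⁻¹) := by
        have hsupp : Function.support (fun k => if N ≤ k + 1 then C * R ^ k else 0) ⊆
            {k : ℕ | N - 1 ≤ k} := by
          intro k hk
          simp only [Function.mem_support, ne_eq, ite_eq_right_iff, not_forall] at hk
          obtain ⟨h1, -⟩ := hk
          simp only [Set.mem_setOf_eq]
          omega
        rw [← tsum_subtype_eq_of_support_subset hsupp]
        set e : ℕ ≃ ↥{k : ℕ | N - 1 ≤ k} :=
          { toFun := fun j => ⟨j + (N-1), Nat.le_add_left _ _⟩
            invFun := fun k => k.1 - (N-1)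
            left_inv := fun j => by simp
            right_inv := fun k => by
              ext
              simp [Nat.sub_add_cancel k.2] } with he
        have h1 : (∑' x : ↥{k : ℕ | N - 1 ≤ k},
            (if N ≤ (x:ℕ) + 1 then C * R ^ (x:ℕ) else 0)) =
            ∑' j : ℕ, C * R ^ (N-1) * R ^ j := by
          rw [← e.tsum_eq]
          refine tsum_congr fun j => ?_
          simp only [he, Equiv.coe_fn_mk]
          rw [if_pos (by omega), pow_add]
          ring
        rw [h1, ENNReal.tsum_mul_left, ENNReal.tsum_geometric, mul_assoc]

/-- upper bound for the Hausdorff dimension of `F(α)`. -/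
theorem p2d_dimH_F_alpha_le (α : ℝ) (hα : 0 < α) (s : ℝ) (hs : 0 < s)
    (heq : (2:ℝ) ^ (s * α) * ((2:ℝ) ^ s - 1) = 1) :
    dimH {x : ℝ | x ∈ Set.Ioc (0:ℝ) 1 ∧
        ∃ᶠ n in atTop, (α * n ≤ (p2dDigit n x : ℝ))} ≤ ENNReal.ofReal s := by
  set F := {x : ℝ | x ∈ Set.Ioc (0:ℝ) 1 ∧
      ∃ᶠ n in atTop, (α * n ≤ (p2dDigit n x : ℝ))} with hF
  refine ENNReal.le_of_forall_pos_le_add fun ε hε _ => ?_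
  set τ : ℝ := s + ε with hτdef
  have hε' : (0:ℝ) < ε := hε
  have hτs : s < τ := by rw [hτdef]; linarith
  have hτ : 0 < τ := hs.trans hτs
  have hgoal : ENNReal.ofReal s + (ε : ℝ≥0∞) = ENNReal.ofReal τ := by
    rw [hτdef, ENNReal.ofReal_add hs.le hε'.le, ENNReal.ofReal_coe_nnreal]
  rw [hgoal]
  -- real-number estimates
  have hq1 : (2:ℝ) ^ (-τ) < 1 := by
    have := Real.rpow_lt_one_of_one_lt_of_neg one_lt_two (neg_neg_iff_pos.2 hτ)
    exact this
  have h1q : (0:ℝ) < 1 - (2:ℝ) ^ (-τ) := by linarith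
  have hkey : (2:ℝ) ^ (-(τ * α)) < (2:ℝ) ^ τ - 1 := by
    have h2sa : (0:ℝ) < (2:ℝ) ^ (s * α) := Real.rpow_pos_of_pos two_pos _
    have h2s : (2:ℝ) ^ s - 1 = (2:ℝ) ^ (-(s * α)) := by
      rw [Real.rpow_neg two_pos.le]
      field_simp
      linear_combination heq
    have hstep1 : (2:ℝ) ^ (-(τ * α)) < (2:ℝ) ^ (-(s * α)) := by
      rw [Real.rpow_lt_rpow_left_iff one_lt_two]
      nlinarith
    have hstep2 : (2:ℝ) ^ s < (2:ℝ) ^ τ := by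
      rw [Real.rpow_lt_rpow_left_iff one_lt_two]; exact hτs
    linarith [hstep1, h2s, hstep2]
  set ρ : ℝ := (2:ℝ) ^ (-(τ * (α + 1))) * (1 - (2:ℝ) ^ (-τ))⁻¹ with hρdef
  have hρ1 : ρ < 1 := by
    rw [hρdef, ← div_eq_mul_inv, div_lt_one h1q]
    have e1 : (2:ℝ) ^ (-(τ * (α + 1))) = (2:ℝ) ^ (-(τ * α)) * (2:ℝ) ^ (-τ) := by
      rw [← Real.rpow_add two_pos]; ring_nf
    have e2 : 1 - (2:ℝ) ^ (-τ) = ((2:ℝ) ^ τ - 1) * (2:ℝ) ^ (-τ) := by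
      have : (2:ℝ) ^ τ * (2:ℝ) ^ (-τ) = 1 := by
        rw [← Real.rpow_add two_pos]; simp
      nlinarith [this]
    rw [e1, e2]
    exact mul_lt_mul_of_pos_right hkey (Real.rpow_pos_of_pos two_pos _)
  -- ENNReal versions
  set Q : ℝ≥0∞ := ENNReal.ofReal ((2:ℝ) ^ (-τ)) with hQdef
  set R : ℝ≥0∞ := ENNReal.ofReal ((2:ℝ) ^ (-(τ * (α + 1)))) * (1 - Q)⁻¹ with hRdef
  have hQR : (1:ℝ≥0∞) - Q = ENNReal.ofReal (1 - (2:ℝ) ^ (-τ)) := by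
    rw [hQdef, ENNReal.ofReal_sub _ (Real.rpow_nonneg two_pos.le _), ENNReal.ofReal_one]
  have hRof : R = ENNReal.ofReal ρ := by
    rw [hRdef, hQR, ← ENNReal.ofReal_inv_of_pos h1q,
      ← ENNReal.ofReal_mul (Real.rpow_nonneg two_pos.le _)]
  have hR1 : R < 1 := by rw [hRof]; exact ENNReal.ofReal_lt_one.2 hρ1
  set C : ℝ≥0∞ := ENNReal.ofReal ((2:ℝ) ^ (τ * (1 - α))) with hCdef
  set K : ℝ≥0∞ := C * (1 - R)⁻¹ with hKdef
  have hKne : K ≠ ∞ := by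
    rw [hKdef]
    apply ENNReal.mul_ne_top ENNReal.ofReal_ne_top
    rw [ENNReal.inv_ne_top]
    simpa [pos_iff_ne_zero] using (tsub_pos_of_lt hR1).ne'
  -- the Hausdorff measure vanishes
  have hμ0 : μH[τ] F = 0 := by
    have hmesh : Tendsto (fun N : ℕ => ENNReal.ofReal ((2:ℝ) ^ ((2:ℝ) - N))) atTop (𝓝 0) := by
      have e3 : ∀ N : ℕ, ENNReal.ofReal ((2:ℝ) ^ ((2:ℝ) - N)) =
          ENNReal.ofReal 4 * (ENNReal.ofReal ((2:ℝ) ^ (-1:ℝ))) ^ N := by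
        intro N
        rw [← ENNReal.ofReal_pow (Real.rpow_nonneg two_pos.le _),
          ← Real.rpow_natCast ((2:ℝ) ^ (-1:ℝ)) N, ← Real.rpow_mul two_pos.le,
          ← ENNReal.ofReal_mul (by norm_num)]
        congr 1
        rw [show (4:ℝ) = (2:ℝ) ^ (2:ℝ) by
          rw [show (2:ℝ) = ((2:ℕ):ℝ) by norm_num, Real.rpow_natCast]; norm_num]
        rw [← Real.rpow_add two_pos]
        congr 1
        ring
      simp only [e3]
      have h12 : ENNReal.ofReal ((2:ℝ) ^ (-1:ℝ)) < 1 :=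
        ENNReal.ofReal_lt_one.2 (Real.rpow_lt_one_of_one_lt_of_neg one_lt_two (by norm_num))
      have := ENNReal.Tendsto.const_mul (a := ENNReal.ofReal 4)
        (ENNReal.tendsto_pow_atTop_nhds_zero_of_lt_one h12)
        (Or.inr ENNReal.ofReal_ne_top)
      simpa using this
    have hcov := Measure.hausdorffMeasure_le_liminf_tsum (ι := fun _ : ℕ => Σ k : ℕ, Fin k → ℕ)
      τ F (fun N : ℕ => ENNReal.ofReal ((2:ℝ) ^ ((2:ℝ) - N))) hmesh
      (fun N p => p2dCover α N p)
      (Eventually.of_forall fun N p => p2dCover_diam_le α hα N p)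
      (Eventually.of_forall fun N => p2dCover_covers α N)
    have hBtend : Tendsto (fun N : ℕ => K * R ^ (N - 1)) atTop (𝓝 0) := by
      have h1 : Tendsto (fun N : ℕ => R ^ N) atTop (𝓝 0) :=
        ENNReal.tendsto_pow_atTop_nhds_zero_of_lt_one hR1
      have h2 : Tendsto (fun N : ℕ => N - 1) atTop atTop := tendsto_sub_atTop_nat 1
      have h3 : Tendsto (fun N : ℕ => R ^ (N - 1)) atTop (𝓝 0) := h1.comp h2
      have := ENNReal.Tendsto.const_mul h3 (Or.inr hKne)
      simpa using this
    have hliminf : liminf (fun N : ℕ =>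
        ∑' p : (Σ k : ℕ, Fin k → ℕ), EMetric.diam (p2dCover α N p) ^ τ) atTop = 0 := by
      apply le_antisymm _ zero_le
      calc liminf (fun N : ℕ =>
            ∑' p : (Σ k : ℕ, Fin k → ℕ), EMetric.diam (p2dCover α N p) ^ τ) atTop
          ≤ liminf (fun N : ℕ => K * R ^ (N - 1)) atTop := by
            refine liminf_le_liminf (Eventually.of_forall fun N => ?_)
              (by isBoundedDefault) (by isBoundedDefault)
            refine (p2d_sum_le α τ hα hτ N).trans ?_
            rw [hKdef, hCdef, hRdef, hQdef]
            rw [mul_comm (ENNReal.ofReal ((2:ℝ) ^ (τ * (1 - α)))) _]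
            rw [mul_assoc, mul_comm ((1 - _)⁻¹) _]
            exact le_of_eq (by ring)
        _ = 0 := hBtend.liminf_eq
    exact le_antisymm (hliminf ▸ hcov) zero_le
  -- conclude via dimH
  have hdim : dimH F ≤ (τ.toNNReal : ℝ≥0∞) := by
    apply dimH_le_of_hausdorffMeasure_ne_top
    rw [show ((τ.toNNReal : ℝ)) = τ from Real.coe_toNNReal _ hτ.le, hμ0]
    exact ENNReal.zero_ne_top
  refine hdim.trans_eq ?_
  rfl
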